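/- Let A be a Grothendieck abelian category and (U,V) a complete hereditary cotorsion pair in A. Suppose β : U → U′ is a chain map of complexes whose mapping cone is U-acyclic (acyclic with cycles in U and Hom(−, W)-exact for the relevant class), V is a complex of objects in V such that Hom_A(C, V) is acyclic for every U-acyclic complex C, and α : U → V is a chain map. Then there exists a chain map γ : U′ → V with γ∘β chain homotopic to α, and γ is unique up to chain homotopy. -/

import Mathlib

open CategoryTheory Category Limits

universe v u

noncomputable instance : DecidableRel (ComplexShape.up ℤ).Rel :=
  fun _ _ => Classical.dec _

instance {A : Type u} [Category.{v} A] [Abelian A] {X Y : CochainComplex A ℤ} (α : X ⟶ Y) :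
    HomologicalComplex.HasHomotopyCofiber α :=
  ⟨fun _ _ _ => inferInstance⟩

/-- A `U`-acyclic complex: an acyclic complex of objects of `U` whose cycle objects lie
in `U`. -/
def UAcyclicComplex {A : Type u} [Category.{v} A] [Abelian A] (U : Set A)
    (C : CochainComplex A ℤ) : Prop :=
  (∀ n, C.X n ∈ U) ∧ (∀ n, C.ExactAt n) ∧ (∀ n, C.cycles n ∈ U)

/-- The total Hom complex `Hom_A(C, V)` is acyclic, encoded as: every chain map from `C`
to any shift of `V` is null-homotopic. -/
def HomComplexAcyclic {A : Type u} [Category.{v} A] [Abelian A]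
    (C V : CochainComplex A ℤ) : Prop :=
  ∀ (k : ℤ) (f : C ⟶ V⟦k⟧), Nonempty (Homotopy f 0)

/-- Lifting along `U`-quasi-isomorphisms into semi-`V` complexes, in a Grothendieck abelian
category with a complete hereditary cotorsion pair `(U,V)` (encoded via AB5 and a separator):
if the mapping cone of `β : U₁ ⟶ U₂` is `U`-acyclic, `V'` is a complex of objects of `V`
with `Hom_A(C, V')` acyclic for every `U`-acyclic `C`, and `α : U₁ ⟶ V'`, then there is
`γ : U₂ ⟶ V'` with `γ ∘ β` homotopic to `α`, and `γ` is unique up to homotopy. -/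
theorem stmt9 {A : Type u} [Category.{v} A] [Abelian A]
    [HasFilteredColimits A] [AB5 A] (G : A) (hG : IsSeparator G)
    (U V : Set A)
    (hcomplete : ∀ M : A, (∃ (V₀ U₀ : A) (f : V₀ ⟶ U₀) (g : U₀ ⟶ M) (w : f ≫ g = 0),
        V₀ ∈ V ∧ U₀ ∈ U ∧ (ShortComplex.mk f g w).ShortExact) ∧
      (∃ (V₀ U₀ : A) (f : M ⟶ V₀) (g : V₀ ⟶ U₀) (w : f ≫ g = 0),
        V₀ ∈ V ∧ U₀ ∈ U ∧ (ShortComplex.mk f g w).ShortExact))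
    (U₁ U₂ V' : CochainComplex A ℤ) (β : U₁ ⟶ U₂)
    (hβ : UAcyclicComplex U (HomologicalComplex.homotopyCofiber β))
    (hV' : ∀ n, V'.X n ∈ V)
    (hsemi : ∀ C : CochainComplex A ℤ, UAcyclicComplex U C → HomComplexAcyclic C V')
    (α : U₁ ⟶ V') :
    ∃ γ : U₂ ⟶ V', Nonempty (Homotopy (β ≫ γ) α) ∧
      ∀ γ' : U₂ ⟶ V', Nonempty (Homotopy (β ≫ γ') α) → Nonempty (Homotopy γ' γ) := by
    classical
  let Q := HomotopyCategory.quotient A (ComplexShape.up ℤ)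
  let Cn := CochainComplex.mappingCone β
  have hd : ∀ (I₁ I₂ : DecidableRel (ComplexShape.up ℤ).Rel), I₁ = I₂ := by
    intro I₁ I₂
    funext a b
    exact Subsingleton.elim _ _
  have hβ' : UAcyclicComplex U Cn := by
    have heq : HomologicalComplex.homotopyCofiber β = Cn :=
      congrArg (fun (I : DecidableRel (ComplexShape.up ℤ).Rel) =>
        @HomologicalComplex.homotopyCofiber A _ _ ℤ (ComplexShape.up ℤ) U₁ U₂ β _ I) (hd _ _)
    exact heq ▸ hβ
  have hC : HomComplexAcyclic Cn V' := hsemi Cn hβ'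
  -- any map Q Cn ⟶ (Q V')⟦k⟧ is zero
  have hzero : ∀ (k : ℤ) (f : Q.obj Cn ⟶ (Q.obj V')⟦k⟧), f = 0 := by
    intro k f
    obtain ⟨g, hg⟩ := Q.map_surjective (f ≫ (Q.commShiftIso k).inv.app V')
    obtain ⟨h⟩ := hC k g
    have h0 : Q.map g = 0 := by
      rw [HomotopyCategory.eq_of_homotopy _ _ h, Functor.map_zero]
    rw [← cancel_mono ((Q.commShiftIso k).inv.app V'), zero_comp, ← hg, h0]
  have hzero0 : ∀ (f : Q.obj Cn ⟶ Q.obj V'), f = 0 := by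
    intro f
    have := hzero 0 (f ≫ (shiftFunctorZero _ ℤ).inv.app (Q.obj V'))
    rwa [← cancel_mono ((shiftFunctorZero _ ℤ).inv.app (Q.obj V')), zero_comp]
  have hzeroS : ∀ (f : (Q.obj Cn)⟦(-1 : ℤ)⟧ ⟶ Q.obj V'), f = 0 := by
    intro f
    apply (shiftFunctor (HomotopyCategory A (ComplexShape.up ℤ)) (1 : ℤ)).map_injective
    rw [Functor.map_zero]
    have h0 := hzero 1 ((shiftFunctorCompIsoId (HomotopyCategory A (ComplexShape.up ℤ))
      (-1 : ℤ) (1 : ℤ) (by ring)).inv.app (Q.obj Cn) ≫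
        (shiftFunctor (HomotopyCategory A (ComplexShape.up ℤ)) (1 : ℤ)).map f)
    rwa [← cancel_epi ((shiftFunctorCompIsoId (HomotopyCategory A (ComplexShape.up ℤ))
      (-1 : ℤ) (1 : ℤ) (by ring)).inv.app (Q.obj Cn)), comp_zero]
  -- the distinguished triangle
  have hT := HomotopyCategory.mappingCone_triangleh_distinguished β
  set T := CochainComplex.mappingCone.triangleh β with hTdef
  -- existence
  obtain ⟨g, hg⟩ := Pretriangulated.Triangle.yoneda_exact₂ _
    (Pretriangulated.inv_rot_of_distTriang _ hT) (Q.map α) (hzeroS _)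
  obtain ⟨γ, hγ⟩ := Q.map_surjective (show Q.obj U₂ ⟶ Q.obj V' from g)
  have hfac : Q.map (β ≫ γ) = Q.map α := by
    rw [Functor.map_comp, hγ]
    exact hg.symm
  refine ⟨γ, ⟨HomotopyCategory.homotopyOfEq _ _ hfac⟩, ?_⟩
  -- uniqueness
  intro γ' ⟨h'⟩
  have h1 : Q.map β ≫ (Q.map γ' - Q.map γ) = 0 := by
    rw [Preadditive.comp_sub, ← Functor.map_comp, ← Functor.map_comp,
      HomotopyCategory.eq_of_homotopy _ _ h', ← hfac, Functor.map_comp, sub_self]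
  obtain ⟨g', hg'⟩ := Pretriangulated.Triangle.yoneda_exact₂ T hT
    (Q.map γ' - Q.map γ) h1
  rw [hzero0 g'] at hg'
  have hg'' : Q.map γ' = Q.map γ := sub_eq_zero.mp (hg'.trans comp_zero)
  exact ⟨HomotopyCategory.homotopyOfEq _ _ hg''⟩
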